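/- Let α > 0 and h(y) = (y/(1 + αy/(α+1)))^{1/α} for y ≥ 0, and H(y) = ∫₀^y h(u)du + (1/α − y)h(y). Then there exists a unique b_α > 1/α with H(b_α) = 0, and moreover h(b_α)^α < 1 + 1/α. -/

import Mathlib

open Real intervalIntegral

lemma stmt10_qpos (α : ℝ) (hα : 0 < α) {y : ℝ} (hy : 0 ≤ y) :
    0 < 1 + α * y / (α + 1) := by positivity

lemma stmt10_cont (α : ℝ) (hα : 0 < α) {y : ℝ} (hy : 0 ≤ y) :
    ContinuousAt (fun y : ℝ => (y / (1 + α * y / (α + 1))) ^ (1 / α)) y := by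
  have hq := stmt10_qpos α hα hy
  have hg : ContinuousAt (fun y : ℝ => y / (1 + α * y / (α + 1))) y := by
    exact ContinuousAt.div continuousAt_id (by fun_prop) hq.ne'
  exact (Real.continuousAt_rpow_const _ _ (Or.inr (by positivity))).comp hg

lemma stmt10_int (α : ℝ) (hα : 0 < α) {y : ℝ} (hy : 0 ≤ y) :
    IntervalIntegrable (fun y : ℝ => (y / (1 + α * y / (α + 1))) ^ (1 / α))
      MeasureTheory.volume 0 y := by
  apply ContinuousOn.intervalIntegrable
  rw [Set.uIcc_of_le hy]
  exact fun x hx => (stmt10_cont α hα hx.1).continuousWithinAt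

lemma stmt10_gderiv (α : ℝ) (hα : 0 < α) {y : ℝ} (hy : 0 < y) :
    HasDerivAt (fun y : ℝ => y / (1 + α * y / (α + 1)))
      (1 / (1 + α * y / (α + 1)) ^ 2) y := by
  have hq := stmt10_qpos α hα hy.le
  have hqd : HasDerivAt (fun y : ℝ => 1 + α * y / (α + 1)) (α / (α + 1)) y := by
    simpa using (((hasDerivAt_id y).const_mul α).div_const (α + 1)).const_add 1
  have := (hasDerivAt_id y).div hqd hq.ne'
  refine this.congr_deriv ?_
  have h1 : α + 1 ≠ 0 := by positivity
  simp only [id_eq]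
  field_simp
  ring

lemma stmt10_hderiv (α : ℝ) (hα : 0 < α) {y : ℝ} (hy : 0 < y) :
    HasDerivAt (fun y : ℝ => (y / (1 + α * y / (α + 1))) ^ (1 / α))
      (1 / (1 + α * y / (α + 1)) ^ 2 * (1 / α) *
        (y / (1 + α * y / (α + 1))) ^ (1 / α - 1)) y := by
  have hq := stmt10_qpos α hα hy.le
  exact (stmt10_gderiv α hα hy).rpow_const (Or.inl (by positivity))

lemma stmt10_hderiv_pos (α : ℝ) (hα : 0 < α) {y : ℝ} (hy : 0 < y) :
    0 < 1 / (1 + α * y / (α + 1)) ^ 2 * (1 / α) *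
        (y / (1 + α * y / (α + 1))) ^ (1 / α - 1) := by
  have hq := stmt10_qpos α hα hy.le
  have : 0 < y / (1 + α * y / (α + 1)) := by positivity
  positivity

lemma stmt10_Hderiv (α : ℝ) (hα : 0 < α) {y : ℝ} (hy : 0 < y) :
    HasDerivAt (fun y : ℝ => (∫ u in (0:ℝ)..y, (u / (1 + α * u / (α + 1))) ^ (1 / α)) +
        (1 / α - y) * (y / (1 + α * y / (α + 1))) ^ (1 / α))
      ((1 / α - y) * (1 / (1 + α * y / (α + 1)) ^ 2 * (1 / α) *
        (y / (1 + α * y / (α + 1))) ^ (1 / α - 1))) y := by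
  have hF : HasDerivAt
      (fun y : ℝ => ∫ u in (0:ℝ)..y, (u / (1 + α * u / (α + 1))) ^ (1 / α))
      ((y / (1 + α * y / (α + 1))) ^ (1 / α)) y := by
    refine integral_hasDerivAt_right (stmt10_int α hα hy.le) ?_ (stmt10_cont α hα hy.le)
    exact ContinuousAt.stronglyMeasurableAtFilter isOpen_Ioi
      (fun x hx => stmt10_cont α hα (le_of_lt hx)) y hy
  have hlin : HasDerivAt (fun y : ℝ => 1 / α - y) (-1) y := by
    simpa using (hasDerivAt_id y).const_sub (1 / α)
  have := hF.add (hlin.mul (stmt10_hderiv α hα hy))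
  refine this.congr_deriv ?_
  ring

lemma stmt10_rw (α : ℝ) (hα : 0 < α) {u : ℝ} (hu : 0 ≤ u) :
    (u / (1 + α * u / (α + 1))) ^ (1 / α) =
      ((α + 1) / α) ^ (1 / α) * (u / (u + (α + 1) / α)) ^ (1 / α) := by
  have hα1 : (0:ℝ) < α + 1 := by positivity
  have hq : 0 < 1 + α * u / (α + 1) := by positivity
  have hK : (0:ℝ) < (α + 1) / α := by positivity
  have huK : 0 < u + (α + 1) / α := by positivity
  rw [← Real.mul_rpow hK.le (by positivity)]
  congr 1
  field_simp
  ring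

-- pointwise bounds: with t = u/(u+K) ∈ [0,1), m = min 1 (1/α), M = max 1 (1/α):
-- 1 - M*(1-t) ≤ t^(1/α) ≤ 1 - m*(1-t)

lemma stmt10_t_ub (α : ℝ) (hα : 0 < α) {t : ℝ} (ht0 : 0 ≤ t) (ht1 : t < 1) :
    t ^ (1 / α) ≤ 1 - min 1 (1/α) * (1 - t) := by
  rcases le_total α 1 with hle | hge
  · -- 1/α ≥ 1, min = 1 ; t^(1/α) ≤ t
    have h1 : (1:ℝ) ≤ 1 / α := by
      rw [le_div_iff₀ hα]; linarith
    have hmin : min 1 (1/α) = 1 := min_eq_left h1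
    rw [hmin]
    have : t ^ (1/α) ≤ t ^ (1:ℝ) := by
      rcases eq_or_lt_of_le ht0 with rfl | ht0'
      · rw [Real.zero_rpow (by positivity), Real.zero_rpow one_ne_zero]
      · exact Real.rpow_le_rpow_of_exponent_ge ht0' ht1.le h1
    rw [Real.rpow_one] at this
    linarith
  · -- 1/α ≤ 1, min = 1/α ; Bernoulli
    have h1 : 1 / α ≤ 1 := by
      rw [div_le_iff₀ hα]; linarith
    have hmin : min 1 (1/α) = 1/α := min_eq_right h1
    rw [hmin]
    have hb := rpow_one_add_le_one_add_mul_self (s := t - 1) (by linarith)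
      (p := 1/α) (by positivity) h1
    have h2 : 1 + (t - 1) = t := by ring
    rw [h2] at hb
    linarith

lemma stmt10_t_lb (α : ℝ) (hα : 0 < α) {t : ℝ} (ht0 : 0 ≤ t) (ht1 : t < 1) :
    1 - max 1 (1/α) * (1 - t) ≤ t ^ (1 / α) := by
  rcases le_total α 1 with hle | hge
  · have h1 : (1:ℝ) ≤ 1 / α := by rw [le_div_iff₀ hα]; linarith
    have hmax : max 1 (1/α) = 1/α := max_eq_right h1
    rw [hmax]
    have hb := one_add_mul_self_le_rpow_one_add (s := t - 1) (by linarith) (p := 1/α) h1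
    have h2 : 1 + (t - 1) = t := by ring
    rw [h2] at hb
    linarith
  · have h1 : 1 / α ≤ 1 := by rw [div_le_iff₀ hα]; linarith
    have hmax : max 1 (1/α) = 1 := max_eq_left h1
    rw [hmax]
    have : t ^ (1:ℝ) ≤ t ^ (1/α) := by
      rcases eq_or_lt_of_le ht0 with rfl | ht0'
      · rw [Real.rpow_one]; exact Real.rpow_nonneg le_rfl _
      · exact Real.rpow_le_rpow_of_exponent_ge ht0' ht1.le h1
    rw [Real.rpow_one] at this
    linarith

lemma stmt10_f_ub (α : ℝ) (hα : 0 < α) {u : ℝ} (hu : 0 ≤ u) :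
    (u / (1 + α * u / (α + 1))) ^ (1 / α) ≤
      ((α + 1) / α) ^ (1 / α) -
        ((α + 1) / α) ^ (1 / α) * min 1 (1/α) * ((α + 1) / α) * (1 / (u + (α + 1) / α)) := by
  have hK : (0:ℝ) < (α + 1) / α := by positivity
  have huK : 0 < u + (α + 1) / α := by positivity
  have ht0 : 0 ≤ u / (u + (α + 1) / α) := by positivity
  have ht1 : u / (u + (α + 1) / α) < 1 := by
    rw [div_lt_one huK]; linarith
  have h1mt : 1 - u / (u + (α + 1) / α) = ((α + 1) / α) / (u + (α + 1) / α) := by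
    field_simp
    ring
  have hc : (0:ℝ) < ((α + 1) / α) ^ (1 / α) := Real.rpow_pos_of_pos hK _
  rw [stmt10_rw α hα hu]
  have := mul_le_mul_of_nonneg_left (stmt10_t_ub α hα ht0 ht1) hc.le
  calc ((α + 1) / α) ^ (1 / α) * (u / (u + (α + 1) / α)) ^ (1 / α)
      ≤ ((α + 1) / α) ^ (1 / α) * (1 - min 1 (1/α) * (1 - u / (u + (α + 1) / α))) := this
    _ = _ := by rw [h1mt]; ring

lemma stmt10_f_lb (α : ℝ) (hα : 0 < α) {u : ℝ} (hu : 0 ≤ u) :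
    ((α + 1) / α) ^ (1 / α) -
        ((α + 1) / α) ^ (1 / α) * max 1 (1/α) * ((α + 1) / α) * (1 / (u + (α + 1) / α)) ≤
      (u / (1 + α * u / (α + 1))) ^ (1 / α) := by
  have hK : (0:ℝ) < (α + 1) / α := by positivity
  have huK : 0 < u + (α + 1) / α := by positivity
  have ht0 : 0 ≤ u / (u + (α + 1) / α) := by positivity
  have ht1 : u / (u + (α + 1) / α) < 1 := by
    rw [div_lt_one huK]; linarith
  have h1mt : 1 - u / (u + (α + 1) / α) = ((α + 1) / α) / (u + (α + 1) / α) := by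
    field_simp
    ring
  have hc : (0:ℝ) < ((α + 1) / α) ^ (1 / α) := Real.rpow_pos_of_pos hK _
  rw [stmt10_rw α hα hu]
  have := mul_le_mul_of_nonneg_left (stmt10_t_lb α hα ht0 ht1) hc.le
  calc ((α + 1) / α) ^ (1 / α) - ((α + 1) / α) ^ (1 / α) * max 1 (1/α) * ((α + 1) / α) *
          (1 / (u + (α + 1) / α))
      = ((α + 1) / α) ^ (1 / α) * (1 - max 1 (1/α) * (1 - u / (u + (α + 1) / α))) := by
        rw [h1mt]; ring
    _ ≤ _ := this

lemma stmt10_log_int {K y : ℝ} (hK : 0 < K) (hy : 0 ≤ y) :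
    ∫ u in (0:ℝ)..y, 1 / (u + K) = Real.log ((y + K) / K) := by
  have h := intervalIntegral.integral_comp_add_right (a := (0:ℝ)) (b := y)
    (fun x : ℝ => 1 / x) K
  rw [h, zero_add, integral_one_div]
  intro hmem
  rw [Set.uIcc_of_le (by linarith)] at hmem
  exact absurd hmem.1 (by linarith)

lemma stmt10_int_aux {K a c : ℝ} (hK : 0 < K) {y : ℝ} (hy : 0 ≤ y) :
    IntervalIntegrable (fun u : ℝ => a - c * (1 / (u + K)))
      MeasureTheory.volume 0 y := by
  apply ContinuousOn.intervalIntegrable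
  apply ContinuousOn.sub continuousOn_const
  apply ContinuousOn.mul continuousOn_const
  apply ContinuousOn.div continuousOn_const (by fun_prop)
  intro x hx
  rw [Set.uIcc_of_le hy] at hx
  have := hx.1
  positivity

lemma stmt10_integral_ub (α : ℝ) (hα : 0 < α) {y : ℝ} (hy : 0 ≤ y) :
    (∫ u in (0:ℝ)..y, (u / (1 + α * u / (α + 1))) ^ (1 / α)) ≤
      ((α + 1) / α) ^ (1 / α) * y -
        ((α + 1) / α) ^ (1 / α) * min 1 (1/α) * ((α + 1) / α) *
          Real.log ((y + (α + 1) / α) / ((α + 1) / α)) := by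
  have hK : (0:ℝ) < (α + 1) / α := by positivity
  set c := ((α + 1) / α) ^ (1 / α) * min 1 (1/α) * ((α + 1) / α) with hc
  have hmono : (∫ u in (0:ℝ)..y, (u / (1 + α * u / (α + 1))) ^ (1 / α)) ≤
      ∫ u in (0:ℝ)..y, (((α + 1) / α) ^ (1 / α) - c * (1 / (u + (α + 1) / α))) := by
    apply intervalIntegral.integral_mono_on hy (stmt10_int α hα hy)
      (stmt10_int_aux hK hy)
    intro x hx
    exact stmt10_f_ub α hα hx.1
  refine hmono.trans_eq ?_
  have hint1 : IntervalIntegrable (fun u : ℝ => 1 / (u + (α + 1) / α))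
      MeasureTheory.volume 0 y := by
    apply ContinuousOn.intervalIntegrable
    apply ContinuousOn.div continuousOn_const (by fun_prop)
    intro x hx
    rw [Set.uIcc_of_le hy] at hx
    have := hx.1
    positivity
  rw [intervalIntegral.integral_sub intervalIntegrable_const (hint1.const_mul c),
    intervalIntegral.integral_const_mul, stmt10_log_int hK hy,
    intervalIntegral.integral_const]
  simp [smul_eq_mul, mul_comm]

lemma stmt10_neg (α : ℝ) (hα : 0 < α) :
    ∃ T : ℝ, 1 / α < T ∧
      (∫ u in (0:ℝ)..T, (u / (1 + α * u / (α + 1))) ^ (1 / α)) +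
        (1 / α - T) * (T / (1 + α * T / (α + 1))) ^ (1 / α) < 0 := by
  have hK : (0:ℝ) < (α + 1) / α := by positivity
  set K : ℝ := (α + 1) / α with hKdef
  have hc : (0:ℝ) < K ^ (1 / α) := Real.rpow_pos_of_pos hK _
  set c : ℝ := K ^ (1 / α) with hcdef
  set m : ℝ := min 1 (1 / α) with hmdef
  set M : ℝ := max 1 (1 / α) with hMdef
  have hm : 0 < m := lt_min one_pos (by positivity)
  have hM : 0 < M := lt_of_lt_of_le one_pos (le_max_left _ _)
  set A : ℝ := c / α + c * M * K with hAdef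
  set B : ℝ := c * m * K with hBdef
  have hA : 0 < A := by positivity
  have hB : 0 < B := by positivity
  set T : ℝ := K * Real.exp (A / B + 1) - K with hTdef
  have hexp : A / B + 2 ≤ Real.exp (A / B + 1) := by
    have := Real.add_one_le_exp (A / B + 1)
    linarith
  have hT2 : 2 * K < T + K := by
    have h2 : (2:ℝ) < Real.exp (A / B + 1) := by
      have : (0:ℝ) < A / B := by positivity
      linarith
    calc 2 * K < Real.exp (A / B + 1) * K := by nlinarith
      _ = T + K := by rw [hTdef]; ring
  have hTK : 1 / α < K := by
    rw [hKdef]; rw [div_lt_div_iff₀ hα hα]; nlinarith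
  have hT : 1 / α < T := by
    have hKT : K < T := by linarith
    exact hTK.trans hKT
  have hT0 : (0:ℝ) ≤ T := le_of_lt (lt_of_le_of_lt (by positivity) hT)
  refine ⟨T, hT, ?_⟩
  have hD : 0 < T + K := by linarith
  have hlog : Real.log ((T + K) / K) = A / B + 1 := by
    have : (T + K) / K = Real.exp (A / B + 1) := by
      rw [hTdef]; field_simp; ring
    rw [this, Real.log_exp]
  -- bound the product term
  have hprod : (1 / α - T) * (T / (1 + α * T / (α + 1))) ^ (1 / α) ≤
      (1 / α - T) * (c - c * M * K * (1 / (T + K))) := by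
    apply mul_le_mul_of_nonpos_left (stmt10_f_lb α hα hT0)
    linarith
  have hint := stmt10_integral_ub α hα hT0
  rw [hlog, ← hKdef, ← hcdef, ← hmdef, ← hBdef] at hint
  have hBL : B * (A / B + 1) = A + B := by field_simp
  have key : c * T + (1 / α - T) * (c - c * M * K * (1 / (T + K))) ≤ A := by
    have hTD : T / (T + K) ≤ 1 := by rw [div_le_one hD]; linarith
    have e1 : (1 / α - T) * (c - c * M * K * (1 / (T + K))) =
        c / α - c * T - c * M * K / (α * (T + K)) + c * M * K * (T / (T + K)) := by
      field_simp
      ring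
    rw [e1]
    have h2 : 0 ≤ c * M * K / (α * (T + K)) := by positivity
    have h3 : c * M * K * (T / (T + K)) ≤ c * M * K := by
      nlinarith [mul_le_mul_of_nonneg_left hTD (show (0:ℝ) ≤ c * M * K by positivity)]
    rw [hAdef]
    linarith
  calc (∫ u in (0:ℝ)..T, (u / (1 + α * u / (α + 1))) ^ (1 / α)) +
        (1 / α - T) * (T / (1 + α * T / (α + 1))) ^ (1 / α)
      ≤ (c * T - B * (A / B + 1)) + (1 / α - T) * (c - c * M * K * (1 / (T + K))) :=
        add_le_add hint hprod
    _ = (c * T + (1 / α - T) * (c - c * M * K * (1 / (T + K)))) - (A + B) := by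
        rw [hBL]; ring
    _ < 0 := by linarith


theorem stmt10 (α : ℝ) (hα : 0 < α) (h H : ℝ → ℝ)
    (hh : ∀ y, h y = (y / (1 + α * y / (α + 1))) ^ (1 / α))
    (hH : ∀ y, H y = (∫ u in (0:ℝ)..y, h u) + (1 / α - y) * h y) :
    ∃ b : ℝ, 1 / α < b ∧ H b = 0 ∧ (h b) ^ α < 1 + 1 / α ∧
      ∀ b' : ℝ, 1 / α < b' → H b' = 0 → b' = b := by
  have hhf : h = fun y : ℝ => (y / (1 + α * y / (α + 1))) ^ (1 / α) := funext hh
  subst hhf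
  have hHf : H = fun y : ℝ => (∫ u in (0:ℝ)..y, (u / (1 + α * u / (α + 1))) ^ (1 / α)) +
      (1 / α - y) * (y / (1 + α * y / (α + 1))) ^ (1 / α) := funext hH
  subst hHf
  have hs : (0:ℝ) < 1 / α := by positivity
  -- strict antitonicity on [1/α, ∞)
  have hanti : StrictAntiOn
      (fun y : ℝ => (∫ u in (0:ℝ)..y, (u / (1 + α * u / (α + 1))) ^ (1 / α)) +
        (1 / α - y) * (y / (1 + α * y / (α + 1))) ^ (1 / α)) (Set.Ici (1 / α)) := by
    apply strictAntiOn_of_deriv_neg (convex_Ici _)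
    · intro x hx
      exact (stmt10_Hderiv α hα (hs.trans_le hx)).continuousAt.continuousWithinAt
    · intro x hx
      rw [interior_Ici] at hx
      have hx0 : 0 < x := hs.trans hx
      rw [(stmt10_Hderiv α hα hx0).deriv]
      apply mul_neg_of_neg_of_pos
      · simp only [Set.mem_Ioi] at hx; linarith
      · exact stmt10_hderiv_pos α hα hx0
  -- positivity at 1/α
  have hpos : 0 < (∫ u in (0:ℝ)..(1/α), (u / (1 + α * u / (α + 1))) ^ (1 / α)) +
      (1 / α - 1 / α) * ((1/α) / (1 + α * (1/α) / (α + 1))) ^ (1 / α) := by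
    rw [sub_self, zero_mul, add_zero]
    apply intervalIntegral.intervalIntegral_pos_of_pos_on (stmt10_int α hα hs.le)
    · intro x hx
      have hq := stmt10_qpos α hα hx.1.le
      have : 0 < x / (1 + α * x / (α + 1)) := div_pos hx.1 hq
      exact Real.rpow_pos_of_pos this _
    · exact hs
  obtain ⟨T, hT, hTneg⟩ := stmt10_neg α hα
  -- IVT on [1/α, T]
  have hcontIcc : ContinuousOn
      (fun y : ℝ => (∫ u in (0:ℝ)..y, (u / (1 + α * u / (α + 1))) ^ (1 / α)) +
        (1 / α - y) * (y / (1 + α * y / (α + 1))) ^ (1 / α)) (Set.Icc (1/α) T) :=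
    fun x hx => (stmt10_Hderiv α hα (hs.trans_le hx.1)).continuousAt.continuousWithinAt
  have hivt := intermediate_value_Icc' hT.le hcontIcc
  have h0mem : (0:ℝ) ∈ Set.Icc
      ((fun y : ℝ => (∫ u in (0:ℝ)..y, (u / (1 + α * u / (α + 1))) ^ (1 / α)) +
        (1 / α - y) * (y / (1 + α * y / (α + 1))) ^ (1 / α)) T)
      ((fun y : ℝ => (∫ u in (0:ℝ)..y, (u / (1 + α * u / (α + 1))) ^ (1 / α)) +
        (1 / α - y) * (y / (1 + α * y / (α + 1))) ^ (1 / α)) (1/α)) :=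
    ⟨le_of_lt hTneg, le_of_lt hpos⟩
  obtain ⟨b, hbmem, hGb⟩ := hivt h0mem
  have hb : 1 / α < b := by
    rcases eq_or_lt_of_le hbmem.1 with heq | hlt
    · exfalso
      rw [← heq] at hGb
      exact hpos.ne' hGb
    · exact hlt
  have hb0 : 0 < b := hs.trans hb
  refine ⟨b, hb, hGb, ?_, ?_⟩
  · -- (h b)^α < 1 + 1/α
    have hq := stmt10_qpos α hα hb0.le
    have hg0 : (0:ℝ) ≤ b / (1 + α * b / (α + 1)) := by positivity
    show ((b / (1 + α * b / (α + 1))) ^ (1 / α)) ^ α < 1 + 1 / α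
    rw [← Real.rpow_mul hg0, one_div_mul_cancel hα.ne', Real.rpow_one]
    rw [div_lt_iff₀ hq]
    have he : (1 + 1/α) * (1 + α * b / (α + 1)) = 1 + 1/α + b := by
      field_simp
    rw [he]
    linarith
  · intro b' hb' hGb'
    exact hanti.injOn (Set.mem_Ici.2 hb'.le) (Set.mem_Ici.2 hb.le) (hGb'.trans hGb.symm)
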